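/- Let j(x,h) = λμ·e^{−μh − λx/(μh)} be the joint density of (X⁺, H⁺) and H > 0 a constant. Then ∫₀^∞∫₀^∞ (x + Hx/h)·j(x,h) dx dh = (2 + Hμ)/λ, i.e., the mean length of the visible region at altitude H⁺ + H without RIS equals (2 + Hμ)/λ. Moreover ∫₀^∞∫₀^∞ (H·e^{μh}/ρ)·j(x,h) dx dh = ∞, so the mean visible length with transmissive RIS is infinite. -/

import Mathlib

open MeasureTheory Real Set

lemma aux_int_exp {r : ℝ} (hr : 0 < r) :
    ∫ t in Set.Ioi (0 : ℝ), Real.exp (-(r * t)) = 1 / r := by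
  have h := Real.integral_rpow_mul_exp_neg_mul_Ioi (a := 1) (r := r) one_pos hr
  rw [show ((1:ℝ) - 1) = 0 by ring] at h
  simpa [Real.Gamma_one] using h

lemma aux_int_x_exp {r : ℝ} (hr : 0 < r) :
    ∫ t in Set.Ioi (0 : ℝ), t * Real.exp (-(r * t)) = 1 / r ^ 2 := by
  have h := Real.integral_rpow_mul_exp_neg_mul_Ioi (a := 2) (r := r) two_pos hr
  rw [show ((2:ℝ) - 1) = 1 by ring] at h
  simp only [Real.rpow_one, Real.Gamma_two, mul_one] at h
  rw [h, div_rpow (by norm_num) hr.le, one_rpow,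
    Real.rpow_two]

lemma aux_int_x2_exp {r : ℝ} (hr : 0 < r) :
    ∫ t in Set.Ioi (0 : ℝ), t ^ 2 * Real.exp (-(r * t)) = 2 / r ^ 3 := by
  have h := Real.integral_rpow_mul_exp_neg_mul_Ioi (a := 3) (r := r) three_pos hr
  rw [show ((3:ℝ) - 1) = 2 by ring] at h
  have hG : Real.Gamma 3 = 2 := by
    rw [show (3:ℝ) = (2:ℕ)+1 by norm_num, Real.Gamma_nat_eq_factorial]
    norm_num
  have heq : ∫ t in Set.Ioi (0 : ℝ), t ^ 2 * Real.exp (-(r * t))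
      = ∫ t in Set.Ioi (0 : ℝ), t ^ (2:ℝ) * Real.exp (-(r * t)) := by
    refine setIntegral_congr_fun measurableSet_Ioi (fun t ht => ?_)
    rw [Real.rpow_two]
  rw [heq, h, hG, div_rpow (by norm_num) hr.le, one_rpow]
  rw [show ((3:ℝ):ℝ) = ((3:ℕ):ℝ) by norm_num, Real.rpow_natCast]
  ring

lemma aux_integrableOn_pow_exp {r : ℝ} (hr : 0 < r) (n : ℕ) :
    IntegrableOn (fun t : ℝ => t ^ n * Real.exp (-(r * t))) (Set.Ioi 0) := by
  have h := integrableOn_rpow_mul_exp_neg_mul_rpow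
    (p := 1) (s := (n : ℝ)) (b := r)
    (lt_of_lt_of_le (by norm_num) (Nat.cast_nonneg n)) one_pos hr
  refine h.congr_fun (fun t ht => ?_) measurableSet_Ioi
  simp only [Real.rpow_one, Real.rpow_natCast]
  ring_nf

/-- with j(x,h) = λμ e^{−μh − λx/(μh)} the joint density of
(X⁺, H⁺) and H > 0 a constant, the mean visible length at altitude H⁺ + H
without RIS is ∫∫ (x + Hx/h) j(x,h) dx dh = (2 + Hμ)/λ, while the mean
additional visible length with transmissive RIS,
∫∫ (H e^{μh}/ρ) j(x,h) dx dh, is infinite (ρ = λ/μ). -/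
theorem mean_visible_length_with_and_without_RIS
    (lam mu H : ℝ) (hlam : 0 < lam) (hmu : 0 < mu) (hH : 0 < H)
    (rho : ℝ) (hrho : rho = lam / mu) :
    (∫ h in Set.Ioi (0 : ℝ), ∫ x in Set.Ioi (0 : ℝ),
        (x + H * x / h) * (lam * mu * Real.exp (-(mu * h) - lam * x / (mu * h)))
      = (2 + H * mu) / lam)
    ∧ (∫⁻ h in Set.Ioi (0 : ℝ), ∫⁻ x in Set.Ioi (0 : ℝ),
        ENNReal.ofReal ((H * Real.exp (mu * h) / rho)
          * (lam * mu * Real.exp (-(mu * h) - lam * x / (mu * h))))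
      = ⊤) := by
  have hrho_pos : 0 < rho := by rw [hrho]; positivity
  constructor
  · -- Part 1
    have key : ∀ h ∈ Set.Ioi (0:ℝ),
        (∫ x in Set.Ioi (0 : ℝ),
          (x + H * x / h) * (lam * mu * Real.exp (-(mu * h) - lam * x / (mu * h))))
        = mu^3 / lam * (h^2 * Real.exp (-(mu * h)))
          + mu^3 * H / lam * (h * Real.exp (-(mu * h))) := by
      intro h hh
      rw [Set.mem_Ioi] at hh
      have hb : 0 < lam / (mu * h) := by positivity
      have heq : ∀ x : ℝ,
          (x + H * x / h) * (lam * mu * Real.exp (-(mu * h) - lam * x / (mu * h)))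
          = (lam * mu * Real.exp (-(mu * h)) * (1 + H / h))
            * (x * Real.exp (-((lam / (mu * h)) * x))) := by
        intro x
        rw [show -(mu * h) - lam * x / (mu * h) = -(mu*h) + (-((lam/(mu*h))*x)) by
          field_simp; ring, Real.exp_add]
        field_simp
      simp_rw [heq]
      rw [integral_const_mul, aux_int_x_exp hb]
      have hmh : mu * h ≠ 0 := by positivity
      field_simp
    rw [setIntegral_congr_fun measurableSet_Ioi key]
    have J2 : IntegrableOn (fun h : ℝ => mu^3 / lam * (h^2 * Real.exp (-(mu * h))))
        (Set.Ioi 0) := by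
      have := (aux_integrableOn_pow_exp hmu 2).const_mul (mu^3/lam)
      exact this
    have J1 : IntegrableOn (fun h : ℝ => mu^3 * H / lam * (h * Real.exp (-(mu * h))))
        (Set.Ioi 0) := by
      have := (aux_integrableOn_pow_exp hmu 1).const_mul (mu^3*H/lam)
      simp only [pow_one] at this
      exact this
    rw [integral_add J2 J1, integral_const_mul, integral_const_mul,
      aux_int_x2_exp hmu]
    have h1 : ∫ h in Set.Ioi (0:ℝ), h * Real.exp (-(mu * h)) = 1 / mu ^ 2 :=
      aux_int_x_exp hmu
    rw [h1]
    field_simp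
  · -- Part 2
    have key : ∀ h ∈ Set.Ioi (0:ℝ),
        (∫⁻ x in Set.Ioi (0 : ℝ),
          ENNReal.ofReal ((H * Real.exp (mu * h) / rho)
            * (lam * mu * Real.exp (-(mu * h) - lam * x / (mu * h)))))
        = ENNReal.ofReal ((H * mu^2 / rho) * h) := by
      intro h hh
      rw [Set.mem_Ioi] at hh
      have hb : 0 < lam / (mu * h) := by positivity
      have heq : ∀ x : ℝ,
          (H * Real.exp (mu * h) / rho)
            * (lam * mu * Real.exp (-(mu * h) - lam * x / (mu * h)))
          = (H * lam * mu / rho) * Real.exp (-((lam / (mu * h)) * x)) := by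
        intro x
        rw [show -(mu * h) - lam * x / (mu * h) = -(mu*h) + (-((lam/(mu*h))*x)) by
          field_simp; ring, Real.exp_add, Real.exp_neg (mu*h)]
        have := Real.exp_pos (mu*h)
        field_simp
      simp_rw [heq]
      have hint : IntegrableOn
          (fun x : ℝ => (H * lam * mu / rho) * Real.exp (-((lam / (mu * h)) * x)))
          (Set.Ioi 0) := by
        have h0 : IntegrableOn
            (fun x : ℝ => (H * lam * mu / rho) * Real.exp (-(lam / (mu * h)) * x))
            (Set.Ioi 0) := (exp_neg_integrableOn_Ioi 0 hb).const_mul _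
        refine h0.congr_fun (fun x _ => ?_) measurableSet_Ioi
        simp only [neg_mul]
      have hnn : 0 ≤ᵐ[volume.restrict (Set.Ioi 0)]
          (fun x : ℝ => (H * lam * mu / rho) * Real.exp (-((lam / (mu * h)) * x))) :=
        ae_of_all _ (fun x => by simp only [Pi.zero_apply]; positivity)
      rw [← ofReal_integral_eq_lintegral_ofReal hint hnn]
      rw [integral_const_mul, aux_int_exp hb]
      congr 1
      have hmh : mu * h ≠ 0 := by positivity
      field_simp
    rw [setLIntegral_congr_fun measurableSet_Ioi key]
    have hk : 0 < H * mu^2 / rho := by positivity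
    rw [eq_top_iff]
    calc (⊤ : ENNReal) = ENNReal.ofReal (H * mu^2 / rho) * volume (Set.Ioi (1:ℝ)) := by
          rw [Real.volume_Ioi, ENNReal.mul_top (by simp [hk, ENNReal.ofReal_pos])]
      _ = ∫⁻ _ in Set.Ioi (1:ℝ), ENNReal.ofReal (H * mu^2 / rho) := by
          rw [setLIntegral_const]
      _ ≤ ∫⁻ h in Set.Ioi (1:ℝ), ENNReal.ofReal ((H * mu^2 / rho) * h) := by
          refine setLIntegral_mono' measurableSet_Ioi (fun h hh => ?_)
          rw [Set.mem_Ioi] at hh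
          exact ENNReal.ofReal_le_ofReal (by nlinarith)
      _ ≤ ∫⁻ h in Set.Ioi (0:ℝ), ENNReal.ofReal ((H * mu^2 / rho) * h) :=
          lintegral_mono' (Measure.restrict_mono (Set.Ioi_subset_Ioi zero_le_one) le_rfl)
            le_rfl
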